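/- For every T > 0, the set {t ∈ [0,T] : X_t ≤ 0} has Lebesgue measure zero; that is, the limit process X is strictly positive almost everywhere on [0,∞). -/

import Mathlib

open MeasureTheory Filter Set

/-- `X` is a continuous solution on `[0,T]` of the ε-approximating equation
`X_t = X₀ + a ∫₀ᵗ (s+ε)^{2H-1} / (X_s 1_{X_s>0} + ε) ds − b ∫₀ᵗ X_s ds + σ g(t)`. -/
def approxSol (X₀ a b σ H : ℝ) (g : ℝ → ℝ) (T ε : ℝ) (X : ℝ → ℝ) : Prop :=
  ContinuousOn X (Set.Icc 0 T) ∧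
    ∀ t ∈ Set.Icc (0:ℝ) T,
      X t = X₀ + a * (∫ s in (0:ℝ)..t,
            (s + ε) ^ (2 * H - 1) / ((if 0 < X s then X s else 0) + ε))
          - b * (∫ s in (0:ℝ)..t, X s) + σ * g t

/-- **Corollary 3.2, first part.** The limit process `X = lim_{ε↓0} X^ε` is
strictly positive almost everywhere: for every `T > 0` the set
`{t ∈ [0,T] : X_t ≤ 0}` has Lebesgue measure zero. -/
lemma ite_eq_max (x : ℝ) : (if 0 < x then x else 0) = max x 0 := by
  split_ifs with h
  · exact (max_eq_left h.le).symm
  · exact (max_eq_right (not_lt.1 h)).symm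

/-- Continuity of the drift integrand. -/
lemma phi_continuousOn {f : ℝ → ℝ} {T ε p : ℝ} (hε : 0 < ε)
    (hf : ContinuousOn f (Icc 0 T)) :
    ContinuousOn (fun s => (s + ε) ^ p / (max (f s) 0 + ε)) (Icc 0 T) := by
  apply ContinuousOn.div
  · apply ContinuousOn.rpow_const (continuousOn_id.add continuousOn_const)
    intro x hx
    left
    have h1 : (0:ℝ) ≤ x := hx.1
    have : (0:ℝ) < x + ε := by linarith
    exact ne_of_gt this
  · exact (hf.sup continuousOn_const).add continuousOn_const
  · intro x hx
    have : (0:ℝ) < max (f x) 0 + ε := by positivity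
    exact ne_of_gt this

/-- Uniform bound and drift-integral bound for an approximating solution, `0 < ε ≤ 1`. -/
lemma approx_bound (X₀ a b σ H : ℝ) (hX₀ : 0 < X₀) (ha : 0 < a) (hb : 0 ≤ b)
    (hσ : 0 < σ) (hH0 : 0 < H) (hH : H < 1/2)
    (g : ℝ → ℝ) (hg0 : g 0 = 0)
    (T : ℝ) (hT : 0 < T) (G : ℝ) (hG : ∀ s ∈ Icc (0:ℝ) T, |g s| ≤ G)
    (ε : ℝ) (hε0 : 0 < ε) (hε1 : ε ≤ 1)
    (X : ℝ → ℝ) (hsol : approxSol X₀ a b σ H g T ε X) :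
    (∀ t ∈ Icc (0:ℝ) T,
      X t ≤ max X₀ 1 + a * ((T+1) ^ (2*H) / (2*H)) + 2*σ*G) ∧
    (∫ s in (0:ℝ)..T, (s + ε) ^ (2*H-1) / (max (X s) 0 + ε)) ≤
      ((max X₀ 1 + a * ((T+1) ^ (2*H) / (2*H)) + 2*σ*G) - X₀
        + b * (T * (max X₀ 1 + a * ((T+1) ^ (2*H) / (2*H)) + 2*σ*G)) + σ*G) / a := by
  obtain ⟨hc, heq⟩ := hsol
  set c : ℝ := max X₀ 1 with hc_def
  set K : ℝ := (T+1) ^ (2*H) / (2*H) with hK_def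
  set M : ℝ := c + a * K + 2*σ*G with hM_def
  set φ : ℝ → ℝ := fun s => (s + ε) ^ (2*H-1) / (max (X s) 0 + ε) with hφ_def
  have heq' : ∀ t ∈ Icc (0:ℝ) T,
      X t = X₀ + a * (∫ s in (0:ℝ)..t, φ s) - b * (∫ s in (0:ℝ)..t, X s) + σ * g t := by
    intro t ht
    have := heq t ht
    simpa only [ite_eq_max] using this
  have hG0 : 0 ≤ G := le_trans (abs_nonneg _) (hG 0 ⟨le_refl _, hT.le⟩)
  have hK0 : 0 ≤ K := by
    apply div_nonneg (Real.rpow_nonneg (by linarith) _) (by linarith)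
  have hc1 : (1:ℝ) ≤ c := le_max_right _ _
  have hφc : ContinuousOn φ (Icc 0 T) := phi_continuousOn hε0 hc
  have hφnn : ∀ s, 0 ≤ s → 0 ≤ φ s := by
    intro s hs
    exact div_nonneg (Real.rpow_nonneg (by linarith) _) (by positivity)
  set ψ : ℝ → ℝ := fun s => (s + ε) ^ (2*H-1) with hψ_def
  have hψc : ContinuousOn ψ (Icc 0 T) := by
    apply ContinuousOn.rpow_const (continuousOn_id.add continuousOn_const)
    intro x hx
    have h1 : (0:ℝ) ≤ x := hx.1
    exact Or.inl (by intro h; simp only [Pi.add_apply, id_eq] at h; nlinarith)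
  have hψnn : ∀ s, 0 ≤ s → 0 ≤ ψ s := fun s hs => Real.rpow_nonneg (by linarith) _
  -- integrability on subintervals of [0,T]
  have hint : ∀ (f : ℝ → ℝ), ContinuousOn f (Icc 0 T) → ∀ u t : ℝ,
      0 ≤ u → u ≤ t → t ≤ T → IntervalIntegrable f volume u t := by
    intro f hf u t hu hut htT
    have : Icc u t ⊆ Icc 0 T := Icc_subset_Icc hu htT
    have := hf.mono this
    rw [← uIcc_of_le hut] at this
    exact this.intervalIntegrable
  -- value of ∫₀^T ψ
  have hψint : ∫ s in (0:ℝ)..T, ψ s = ((T+ε) ^ (2*H) - ε ^ (2*H)) / (2*H) := by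
    have h1 : (∫ s in (0:ℝ)..T, (s + ε) ^ (2*H-1))
        = ∫ s in (0:ℝ)+ε..T+ε, s ^ (2*H-1) :=
      intervalIntegral.integral_comp_add_right (fun x => x ^ (2*H-1)) ε
    rw [hψ_def]
    simp only [zero_add] at h1
    rw [h1, integral_rpow (Or.inl (by linarith))]
    rw [show 2*H-1+1 = 2*H by ring]
  have hψbound : ∫ s in (0:ℝ)..T, ψ s ≤ K := by
    rw [hψint, hK_def]
    rw [div_le_div_iff_of_pos_right (by linarith : (0:ℝ) < 2*H)]
    have h1 : (T+ε) ^ (2*H) ≤ (T+1) ^ (2*H) :=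
      Real.rpow_le_rpow (by linarith) (by linarith) (by linarith)
    have h2 : (0:ℝ) ≤ ε ^ (2*H) := Real.rpow_nonneg hε0.le _
    linarith
  -- X 0 = X₀
  have hX0 : X 0 = X₀ := by
    have := heq' 0 ⟨le_refl _, hT.le⟩
    simpa [hg0] using this
  -- the uniform upper bound
  have hMb : ∀ t ∈ Icc (0:ℝ) T, X t ≤ M := by
    intro t ht
    by_cases hXt : X t ≤ c
    · have : 0 ≤ a * K := by positivity
      have : 0 ≤ 2*σ*G := by positivity
      rw [hM_def]; linarith
    push_neg at hXt
    set S : Set ℝ := {s ∈ Icc 0 t | X s ≤ c} with hS_def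
    have hS0 : (0:ℝ) ∈ S := ⟨⟨le_refl _, ht.1⟩, by rw [hX0]; exact le_max_left _ _⟩
    have hSne : S.Nonempty := ⟨0, hS0⟩
    have hSbdd : BddAbove S := BddAbove.mono (fun s hs => hs.1) bddAbove_Icc
    have hSclosed : IsClosed S := by
      have hcXt : ContinuousOn X (Icc 0 t) := hc.mono (Icc_subset_Icc_right ht.2)
      exact hcXt.preimage_isClosed_of_isClosed isClosed_Icc isClosed_Iic
    set u : ℝ := sSup S with hu_def
    have huS : u ∈ S := hSclosed.csSup_mem hSne hSbdd
    have hu0 : 0 ≤ u := huS.1.1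
    have hut : u ≤ t := huS.1.2
    have huT : u ≤ T := hut.trans ht.2
    have hXu : X u ≤ c := huS.2
    -- on (u, t], X > c
    have hbig : ∀ s ∈ Ioc u t, c < X s := by
      intro s hs
      by_contra hcon
      push_neg at hcon
      have : s ∈ S := ⟨⟨hu0.trans hs.1.le, hs.2⟩, hcon⟩
      exact absurd (le_csSup hSbdd this) (not_le.2 hs.1)
    -- the equation between u and t
    have hiphi1 := hint φ hφc 0 u (le_refl _) hu0 huT
    have hiphi2 := hint φ hφc u t hu0 hut ht.2
    have hiX1 := hint X hc 0 u (le_refl _) hu0 huT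
    have hiX2 := hint X hc u t hu0 hut ht.2
    have hadd1 := intervalIntegral.integral_add_adjacent_intervals hiphi1 hiphi2
    have hadd2 := intervalIntegral.integral_add_adjacent_intervals hiX1 hiX2
    have e1 := heq' t ht
    have e2 := heq' u ⟨hu0, huT⟩
    rw [← hadd1, ← hadd2] at e1
    have key : X t = X u + a * (∫ s in u..t, φ s) - b * (∫ s in u..t, X s)
        + σ * (g t - g u) := by rw [e1, e2]; ring
    -- bound the φ integral
    have hφle : (∫ s in u..t, φ s) ≤ ∫ s in u..t, ψ s := by
      apply intervalIntegral.integral_mono_ae_restrict hut hiphi2 (hint ψ hψc u t hu0 hut ht.2)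
      rw [← Measure.restrict_congr_set Ioc_ae_eq_Icc]
      refine (ae_restrict_iff' measurableSet_Ioc).2 (ae_of_all _ ?_)
      intro s hs
      have hXs : c < X s := hbig s hs
      have h1 : (1:ℝ) ≤ max (X s) 0 + ε := by
        have : (1:ℝ) ≤ X s := hc1.trans hXs.le
        have : X s ≤ max (X s) 0 := le_max_left _ _
        nlinarith [hε0.le]
      exact div_le_self (hψnn s (hu0.trans hs.1.le)) h1
    have hψle : (∫ s in u..t, ψ s) ≤ K := by
      have i1 := hint ψ hψc 0 u (le_refl _) hu0 huT
      have i2 := hint ψ hψc u t hu0 hut ht.2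
      have i3 := hint ψ hψc t T ht.1 ht.2 (le_refl _)
      have a1 := intervalIntegral.integral_add_adjacent_intervals i1 i2
      have a2 := intervalIntegral.integral_add_adjacent_intervals
        (i1.trans i2) i3
      have n1 : 0 ≤ ∫ s in (0:ℝ)..u, ψ s :=
        intervalIntegral.integral_nonneg hu0 (fun s hs => hψnn s hs.1)
      have n3 : 0 ≤ ∫ s in t..T, ψ s :=
        intervalIntegral.integral_nonneg ht.2 (fun s hs => hψnn s (ht.1.trans hs.1))
      have := hψbound
      linarith
    -- the X integral is nonnegative on [u,t]
    have hXint_nn : 0 ≤ ∫ s in u..t, X s := by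
      apply intervalIntegral.integral_nonneg_of_ae_restrict hut
      rw [← Measure.restrict_congr_set Ioc_ae_eq_Icc]
      refine (ae_restrict_iff' measurableSet_Ioc).2 (ae_of_all _ ?_)
      intro s hs
      exact le_trans (le_trans zero_le_one hc1) (hbig s hs).le
    have hgt : |g t| ≤ G := hG t ht
    have hgu : |g u| ≤ G := hG u ⟨hu0, huT⟩
    have hgtu : g t - g u ≤ 2*G := by
      have := abs_le.1 hgt
      have := abs_le.1 hgu
      linarith
    have haφ : a * (∫ s in u..t, φ s) ≤ a * K :=
      mul_le_mul_of_nonneg_left (hφle.trans hψle) ha.le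
    have hbX : 0 ≤ b * (∫ s in u..t, X s) := mul_nonneg hb hXint_nn
    have hσg : σ * (g t - g u) ≤ 2*σ*G := by
      have := mul_le_mul_of_nonneg_left hgtu hσ.le
      linarith
    rw [hM_def]
    calc X t = X u + a * (∫ s in u..t, φ s) - b * (∫ s in u..t, X s)
        + σ * (g t - g u) := key
      _ ≤ c + a*K - 0 + 2*σ*G := by
          apply add_le_add ?_ hσg
          apply sub_le_sub ?_ hbX
          exact add_le_add hXu haφ
      _ = c + a*K + 2*σ*G := by ring
  refine ⟨hMb, ?_⟩
  have eT := heq' T ⟨hT.le, le_refl _⟩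
  have hXT : X T ≤ M := hMb T ⟨hT.le, le_refl _⟩
  have hJ : (∫ s in (0:ℝ)..T, X s) ≤ T * M := by
    have h1 : (∫ s in (0:ℝ)..T, X s) ≤ ∫ _ in (0:ℝ)..T, M :=
      intervalIntegral.integral_mono_on hT.le (hint X hc 0 T (le_refl _) hT.le (le_refl _))
        intervalIntegrable_const (fun s hs => hMb s hs)
    rw [intervalIntegral.integral_const, smul_eq_mul, sub_zero] at h1
    exact h1
  have hgT : -G ≤ g T := (abs_le.1 (hG T ⟨hT.le, le_refl _⟩)).1
  rw [le_div_iff₀ ha]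
  have : a * (∫ s in (0:ℝ)..T, φ s) = X T - X₀ + b * (∫ s in (0:ℝ)..T, X s) - σ * g T := by
    rw [eT]; ring
  have hbJ : b * (∫ s in (0:ℝ)..T, X s) ≤ b * (T * M) :=
    mul_le_mul_of_nonneg_left hJ hb
  have hσgT : -(σ * G) ≤ σ * g T := by nlinarith
  calc (∫ s in (0:ℝ)..T, φ s) * a = a * (∫ s in (0:ℝ)..T, φ s) := by ring
    _ = X T - X₀ + b * (∫ s in (0:ℝ)..T, X s) - σ * g T := this
    _ ≤ M - X₀ + b * (T * M) + σ * G := by linarith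
theorem limit_process_ae_positive
    (X₀ a b σ H : ℝ) (hX₀ : 0 < X₀) (ha : 0 < a) (hb : 0 ≤ b) (hσ : 0 < σ)
    (hH0 : 0 < H) (hH : H < 1/2)
    (g : ℝ → ℝ) (hgc : ContinuousOn g (Set.Ici 0)) (hg0 : g 0 = 0)
    (Xe : ℝ → ℝ → ℝ)
    (hXe : ∀ ε > (0:ℝ), ∀ T > (0:ℝ), approxSol X₀ a b σ H g T ε (Xe ε))
    (X : ℝ → ℝ)
    (hX : ∀ t ≥ (0:ℝ),
      Tendsto (fun ε => Xe ε t) (nhdsWithin 0 (Set.Ioi 0)) (nhds (X t)))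
    :
    ∀ T > (0:ℝ), volume {t ∈ Set.Icc (0:ℝ) T | X t ≤ 0} = 0 := by
  intro T hT
  -- a bound for |g| on [0,T]
  obtain ⟨G0, hG0⟩ := isCompact_Icc.exists_bound_of_continuousOn
    (hgc.mono (fun x (hx : x ∈ Icc (0:ℝ) T) => hx.1))
  set G : ℝ := max G0 0 with hG_def
  have hG : ∀ s ∈ Icc (0:ℝ) T, |g s| ≤ G := fun s hs =>
    (hG0 s hs).trans (le_max_left _ _)
  set M : ℝ := max X₀ 1 + a * ((T+1) ^ (2*H) / (2*H)) + 2*σ*G with hM_def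
  set C : ℝ := (M - X₀ + b * (T * M) + σ*G) / a with hC_def
  -- the sequence εₙ = 1/(n+1)
  set e : ℕ → ℝ := fun n => 1 / (n + 1) with he_def
  have he_pos : ∀ n, 0 < e n := fun n => by positivity
  have he_le1 : ∀ n, e n ≤ 1 := fun n => by
    rw [he_def]
    rw [div_le_one (by positivity)]
    exact le_add_of_nonneg_left (Nat.cast_nonneg n)
  have he0 : Tendsto e atTop (nhds 0) := tendsto_one_div_add_atTop_nhds_zero_nat
  have he_t : Tendsto e atTop (nhdsWithin 0 (Ioi 0)) :=
    tendsto_nhdsWithin_of_tendsto_nhds_of_eventually_within _ he0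
      (Eventually.of_forall fun n => he_pos n)
  have hsol : ∀ n, approxSol X₀ a b σ H g T (e n) (Xe (e n)) :=
    fun n => hXe (e n) (he_pos n) T hT
  set φ : ℕ → ℝ → ℝ :=
    fun n s => (s + e n) ^ (2*H-1) / (max (Xe (e n) s) 0 + e n) with hφ_def
  have hbound : ∀ n, (∫ s in (0:ℝ)..T, φ n s) ≤ C := fun n =>
    (approx_bound X₀ a b σ H hX₀ ha hb hσ hH0 hH g hg0 T hT G hG (e n)
      (he_pos n) (he_le1 n) (Xe (e n)) (hsol n)).2
  have hφc : ∀ n, ContinuousOn (φ n) (Icc 0 T) :=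
    fun n => phi_continuousOn (he_pos n) (hsol n).1
  have hφnn : ∀ n, ∀ s, 0 ≤ s → 0 ≤ φ n s := by
    intro n s hs
    apply div_nonneg (Real.rpow_nonneg (by linarith [he_pos n]) _)
    positivity
  set μ : Measure ℝ := volume.restrict (Icc 0 T) with hμ_def
  set fn : ℕ → ℝ → ENNReal := fun n s => ENNReal.ofReal (φ n s) with hfn_def
  have hmeas : ∀ n, AEMeasurable (fn n) μ := fun n =>
    ((hφc n).aemeasurable measurableSet_Icc).ennreal_ofReal
  -- each lintegral is bounded by ofReal C
  have hlin : ∀ n, (∫⁻ s, fn n s ∂μ) ≤ ENNReal.ofReal C := by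
    intro n
    have hInt : Integrable (φ n) μ := (hφc n).integrableOn_Icc
    have hnn : 0 ≤ᵐ[μ] φ n := by
      refine (ae_restrict_iff' measurableSet_Icc).2 (ae_of_all _ ?_)
      intro s hs; exact hφnn n s hs.1
    rw [← ofReal_integral_eq_lintegral_ofReal hInt hnn]
    apply ENNReal.ofReal_le_ofReal
    have : (∫ s, φ n s ∂μ) = ∫ s in (0:ℝ)..T, φ n s := by
      rw [hμ_def, integral_Icc_eq_integral_Ioc, intervalIntegral.integral_of_le hT.le]
    rw [this]
    exact hbound n
  -- Fatou
  have fatou : (∫⁻ s, Filter.liminf (fun n => fn n s) atTop ∂μ) ≤ ENNReal.ofReal C := by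
    refine le_trans (lintegral_liminf_le' hmeas) ?_
    exact liminf_le_of_frequently_le' (Frequently.of_forall fun n => hlin n)
  -- measurable version of the liminf
  set Fn : ℕ → ℝ → ENNReal := fun n => (hmeas n).mk (fn n) with hFn_def
  have hFn_meas : ∀ n, Measurable (Fn n) := fun n => (hmeas n).measurable_mk
  have hFn_ae : ∀ᵐ s ∂μ, ∀ n, fn n s = Fn n s := ae_all_iff.2 fun n => (hmeas n).ae_eq_mk
  have h_ae : (fun s => Filter.liminf (fun n => fn n s) atTop)
      =ᵐ[μ] fun s => Filter.liminf (fun n => Fn n s) atTop := by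
    filter_upwards [hFn_ae] with s hs
    simp only [hs]
  have hlim_meas : Measurable fun s => Filter.liminf (fun n => Fn n s) atTop :=
    Measurable.liminf hFn_meas
  have hfin : (∫⁻ s, Filter.liminf (fun n => Fn n s) atTop ∂μ) ≠ ⊤ := by
    rw [lintegral_congr_ae h_ae.symm]
    exact ne_top_of_le_ne_top ENNReal.ofReal_ne_top fatou
  have haelt : ∀ᵐ s ∂μ, Filter.liminf (fun n => Fn n s) atTop < ⊤ :=
    ae_lt_top hlim_meas hfin
  have haelt' : ∀ᵐ s ∂μ, Filter.liminf (fun n => fn n s) atTop < ⊤ := by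
    filter_upwards [haelt, hFn_ae] with s h1 h2
    simpa only [h2] using h1
  -- on the bad set the liminf is infinite
  have hX00 : X 0 = X₀ := by
    have h1 : Tendsto (fun ε => Xe ε 0) (nhdsWithin 0 (Ioi 0)) (nhds (X 0)) :=
      hX 0 (le_refl _)
    have h2 : Tendsto (fun ε : ℝ => Xe ε 0) (nhdsWithin 0 (Ioi 0)) (nhds X₀) := by
      apply Tendsto.congr' ?_ tendsto_const_nhds
      refine eventually_nhdsWithin_of_forall (fun ε (hε : ε ∈ Ioi (0:ℝ)) => ?_)
      obtain ⟨hc, heq⟩ := hXe ε hε T hT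
      have := heq 0 ⟨le_refl _, hT.le⟩
      simp [hg0] at this
      exact this.symm
    exact tendsto_nhds_unique h1 h2
  have hbad : ∀ s ∈ {t ∈ Icc (0:ℝ) T | X t ≤ 0},
      Filter.liminf (fun n => fn n s) atTop = ⊤ := by
    rintro s ⟨hsI, hsX⟩
    have hs0 : 0 < s := by
      rcases eq_or_lt_of_le hsI.1 with h | h
      · exfalso; rw [← h] at hsX; rw [hX00] at hsX; linarith
      · exact h
    -- Xe (e n) s → X s
    have h1 : Tendsto (fun n => Xe (e n) s) atTop (nhds (X s)) :=
      (hX s hs0.le).comp he_t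
    -- denominator → 0
    have hden : Tendsto (fun n => max (Xe (e n) s) 0 + e n) atTop (nhds 0) := by
      have hmax : Tendsto (fun n => max (Xe (e n) s) 0) atTop (nhds (max (X s) 0)) :=
        h1.max tendsto_const_nhds
      have : max (X s) 0 = 0 := max_eq_right hsX
      rw [this] at hmax
      simpa using hmax.add he0
    have hden_pos : ∀ n, 0 < max (Xe (e n) s) 0 + e n := by
      intro n
      have := he_pos n
      positivity
    have hdeninv : Tendsto (fun n => (max (Xe (e n) s) 0 + e n)⁻¹) atTop atTop :=
      tendsto_inv_nhdsGT_zero.comp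
        (tendsto_nhdsWithin_of_tendsto_nhds_of_eventually_within _ hden
          (Eventually.of_forall fun n => hden_pos n))
    -- numerator → s ^ (2H-1) > 0
    have hnum : Tendsto (fun n => (s + e n) ^ (2*H-1)) atTop (nhds (s ^ (2*H-1))) := by
      have h2 : Tendsto (fun n => s + e n) atTop (nhds s) := by
        simpa using (tendsto_const_nhds.add he0)
      have h3 : ContinuousAt (fun x : ℝ => x ^ (2*H-1)) s :=
        Real.continuousAt_rpow_const s _ (Or.inl (ne_of_gt hs0))
      exact h3.tendsto.comp h2
    have hs_pos : 0 < s ^ (2*H-1) := Real.rpow_pos_of_pos hs0 _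
    have htop : Tendsto (fun n => φ n s) atTop atTop := by
      have := Tendsto.pos_mul_atTop hs_pos hnum hdeninv
      refine this.congr (fun n => ?_)
      rw [hφ_def]
      simp [div_eq_mul_inv]
    have : Tendsto (fun n => fn n s) atTop (nhds ⊤) :=
      ENNReal.tendsto_ofReal_atTop.comp htop
    exact this.liminf_eq
  -- conclude
  set A : Set ℝ := {t ∈ Icc (0:ℝ) T | X t ≤ 0} with hA_def
  have hAsub : A ⊆ {s | ¬ Filter.liminf (fun n => fn n s) atTop < ⊤} := by
    intro s hs h
    rw [hbad s hs] at h
    exact lt_irrefl _ h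
  have hμA : μ A = 0 := measure_mono_null hAsub haelt'
  have : volume A = μ A := by
    rw [hμ_def, Measure.restrict_apply' measurableSet_Icc]
    congr 1
    exact (inter_eq_left.2 (fun s hs => hs.1)).symm
  rw [this, hμA]
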